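/- Let L be a positive integer. Then the function α_L is (4π)-periodic, and for every ω ∈ ℝ, |e^{i α_L(ω)} − 𝓘(ω)| ≤ 2√2 · Δ(ω)^{2L+1}. -/

import Mathlib

open Complex
open scoped Classical

/-- The phase function `α_L`, with the convention `arctan(±∞) = ±π/2` at the
points `ω ∈ 2π + 4πℤ`. -/
noncomputable def alphaL (L : ℕ) (ω : ℝ) : ℝ :=
  if ∃ k : ℤ, ω = 2 * Real.pi + 4 * Real.pi * k then (-1 : ℝ) ^ L * Real.pi
  else 2 * (-1 : ℝ) ^ L * Real.arctan (Real.tan (ω / 4) ^ (2 * L + 1))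

/-- The `(4π)`-periodic rectangular function `𝓘`, equal to `1` on `[-π, π) + 4πℤ`
and `-1` elsewhere. -/
noncomputable def Ifun (ω : ℝ) : ℝ :=
  if ∃ k : ℤ, -Real.pi + 4 * Real.pi * k ≤ ω ∧ ω < Real.pi + 4 * Real.pi * k then 1 else -1

/-- The function `Δ(ω) = min(|tan(ω/4)|, |tan(ω/4)|⁻¹)` (with Lean's conventions
`tan` vanishes where `cos` does, so `Δ = 0` on `2π + 4πℤ` as required). -/
noncomputable def Dfun (ω : ℝ) : ℝ :=
  min |Real.tan (ω / 4)| |Real.tan (ω / 4)|⁻¹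

private lemma abs_exp_I_sub_one (θ : ℝ) :
    ‖Complex.exp (Complex.I * θ) - 1‖ = 2 * |Real.sin (θ / 2)| := by
  have h : Complex.exp (Complex.I * θ) - 1
      = ↑(Real.cos θ - 1) + ↑(Real.sin θ) * Complex.I := by
    rw [mul_comm, Complex.exp_mul_I, ← Complex.ofReal_cos, ← Complex.ofReal_sin]
    push_cast
    ring
  have h2 : ‖Complex.exp (Complex.I * θ) - 1‖ ^ 2 = (2 * |Real.sin (θ/2)|)^2 := by
    rw [h, Complex.sq_norm, Complex.normSq_add_mul_I]
    have hs := Real.sin_sq_eq_half_sub (θ/2)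
    have hc : Real.cos (2 * (θ/2)) = Real.cos θ := by rw [show 2 * (θ/2) = θ by ring]
    rw [hc] at hs
    have := Real.sin_sq_add_cos_sq θ
    rw [mul_pow, _root_.sq_abs]
    nlinarith
  have hnn : (0:ℝ) ≤ 2 * |Real.sin (θ/2)| := by positivity
  nlinarith [norm_nonneg (Complex.exp (Complex.I * θ) - 1)]

private lemma abs_exp_I_add_one (θ : ℝ) :
    ‖Complex.exp (Complex.I * θ) + 1‖ = 2 * |Real.cos (θ / 2)| := by
  have h : Complex.exp (Complex.I * θ) + 1
      = ↑(Real.cos θ + 1) + ↑(Real.sin θ) * Complex.I := by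
    rw [mul_comm, Complex.exp_mul_I, ← Complex.ofReal_cos, ← Complex.ofReal_sin]
    push_cast
    ring
  have h2 : ‖Complex.exp (Complex.I * θ) + 1‖ ^ 2 = (2 * |Real.cos (θ/2)|)^2 := by
    rw [h, Complex.sq_norm, Complex.normSq_add_mul_I]
    have hs := Real.sin_sq_eq_half_sub (θ/2)
    have hc : Real.cos (2 * (θ/2)) = Real.cos θ := by rw [show 2 * (θ/2) = θ by ring]
    rw [hc] at hs
    have h3 := Real.sin_sq_add_cos_sq θ
    have h4 := Real.sin_sq_add_cos_sq (θ/2)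
    rw [mul_pow, _root_.sq_abs]
    nlinarith
  have hnn : (0:ℝ) ≤ 2 * |Real.cos (θ/2)| := by positivity
  nlinarith [norm_nonneg (Complex.exp (Complex.I * θ) + 1)]

private lemma tan_le_tan' {x y : ℝ} (hx : -(Real.pi/2) < x) (hxy : x ≤ y) (hy : y < Real.pi/2) :
    Real.tan x ≤ Real.tan y :=
  Real.strictMonoOn_tan.monotoneOn (Set.mem_Ioo.mpr ⟨hx, lt_of_le_of_lt hxy hy⟩)
    (Set.mem_Ioo.mpr ⟨lt_of_lt_of_le hx hxy, hy⟩) hxy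

private lemma key (ω : ℝ) (hω : ¬ ∃ k : ℤ, ω = 2 * Real.pi + 4 * Real.pi * k) :
    (Ifun ω = 1 ∧ |Real.tan (ω/4)| ≤ 1) ∨ (Ifun ω = -1 ∧ 1 ≤ |Real.tan (ω/4)|) := by
  have hπ := Real.pi_pos
  set k : ℤ := ⌊(ω + Real.pi) / (4*Real.pi)⌋ with hkdef
  have h4π : (0:ℝ) < 4*Real.pi := by linarith
  have h1 : (k:ℝ) * (4*Real.pi) ≤ ω + Real.pi := by
    rw [← le_div_iff₀ h4π]; exact Int.floor_le _
  have h2 : ω + Real.pi < ((k:ℝ)+1) * (4*Real.pi) := by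
    rw [← div_lt_iff₀ h4π]; exact Int.lt_floor_add_one _
  set r : ℝ := ω - 4*Real.pi*k with hrdef
  have hr1 : -Real.pi ≤ r := by simp only [hrdef]; nlinarith
  have hr2 : r < 3*Real.pi := by simp only [hrdef]; nlinarith
  have hωr : ω = r + 4*Real.pi*k := by ring
  have htan : Real.tan (ω/4) = Real.tan (r/4) := by
    have h : ω/4 = r/4 + (k:ℝ) * Real.pi := by rw [hωr]; ring
    rw [h]
    exact (Real.tan_periodic.int_mul k) (r/4)
  rw [htan]
  by_cases hr : r < Real.pi
  · left
    refine ⟨?_, ?_⟩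
    · rw [Ifun, if_pos ⟨k, by constructor <;> nlinarith⟩]
    · have hm1 : Real.tan (-(Real.pi/4)) ≤ Real.tan (r/4) :=
        tan_le_tan' (by linarith) (by linarith) (by linarith)
      have hm2 : Real.tan (r/4) ≤ Real.tan (Real.pi/4) :=
        tan_le_tan' (by linarith) (by linarith) (by linarith)
      rw [Real.tan_neg, Real.tan_pi_div_four] at hm1
      rw [Real.tan_pi_div_four] at hm2
      rw [abs_le]; exact ⟨hm1, hm2⟩
  · right
    push_neg at hr
    have hne : r ≠ 2*Real.pi := by
      intro h
      exact hω ⟨k, by rw [hωr, h]⟩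
    refine ⟨?_, ?_⟩
    · rw [Ifun, if_neg]
      rintro ⟨m, hm1, hm2⟩
      have hklm : (k:ℝ) < m := by nlinarith
      have hkm : k < m := by exact_mod_cast hklm
      have : ((k:ℝ)+1) ≤ m := by exact_mod_cast hkm
      nlinarith
    · rcases lt_or_gt_of_ne hne with h2 | h2
      · have hm1 : Real.tan (Real.pi/4) ≤ Real.tan (r/4) :=
          tan_le_tan' (by linarith) (by linarith) (by linarith)
        rw [Real.tan_pi_div_four] at hm1
        exact le_trans hm1 (le_abs_self _)
      · have ht2 : Real.tan (r/4) = Real.tan (r/4 - Real.pi) := by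
          have h := Real.tan_periodic (r/4 - Real.pi)
          rw [sub_add_cancel] at h
          exact h
        have hm1 : Real.tan (r/4 - Real.pi) ≤ Real.tan (-(Real.pi/4)) :=
          tan_le_tan' (by linarith) (by linarith) (by linarith)
        rw [Real.tan_neg, Real.tan_pi_div_four] at hm1
        rw [ht2]
        calc (1:ℝ) ≤ -(Real.tan (r/4 - Real.pi)) := by linarith
        _ ≤ |Real.tan (r/4 - Real.pi)| := neg_le_abs _

/-- `α_L` is `(4π)`-periodic and `e^{iα_L}` is uniformly close to
the rectangular function `𝓘`. -/
theorem alphaL_periodic_and_close_to_rect (L : ℕ) (hL : 0 < L) :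
    (∀ ω : ℝ, alphaL L (ω + 4 * Real.pi) = alphaL L ω) ∧
    ∀ ω : ℝ,
      ‖Complex.exp (Complex.I * (alphaL L ω : ℂ)) - (Ifun ω : ℂ)‖ ≤
        2 * Real.sqrt 2 * Dfun ω ^ (2 * L + 1) := by
  have hπ := Real.pi_pos
  have hsqrt2 : (1:ℝ) ≤ Real.sqrt 2 := by
    rw [show (1:ℝ) = Real.sqrt 1 by rw [Real.sqrt_one]]
    exact Real.sqrt_le_sqrt (by norm_num)
  constructor
  · intro ω
    have hcond : (∃ k : ℤ, ω + 4*Real.pi = 2*Real.pi + 4*Real.pi*k)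
        ↔ (∃ k : ℤ, ω = 2*Real.pi + 4*Real.pi*k) := by
      constructor
      · rintro ⟨k, hk⟩
        exact ⟨k - 1, by push_cast; linarith⟩
      · rintro ⟨k, hk⟩
        exact ⟨k + 1, by push_cast; linarith⟩
    by_cases h : ∃ k : ℤ, ω = 2*Real.pi + 4*Real.pi*k
    · rw [alphaL, alphaL, if_pos (hcond.mpr h), if_pos h]
    · rw [alphaL, alphaL, if_neg (fun hc => h (hcond.mp hc)), if_neg h]
      have h4 : (ω + 4*Real.pi)/4 = ω/4 + Real.pi := by ring
      rw [h4, Real.tan_periodic (ω/4)]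
  · intro ω
    by_cases hω : ∃ k : ℤ, ω = 2*Real.pi + 4*Real.pi*k
    · rw [alphaL, if_pos hω]
      have hI : Ifun ω = -1 := by
        obtain ⟨k, hk⟩ := hω
        rw [Ifun, if_neg]
        rintro ⟨m, h1, h2⟩
        rw [hk] at h1 h2
        have h3 : (k:ℝ) < m := by nlinarith
        have hkm : k < m := by exact_mod_cast h3
        have : ((k:ℝ)+1) ≤ m := by exact_mod_cast hkm
        nlinarith
      have he : Complex.exp (Complex.I * (((-1:ℝ)^L * Real.pi : ℝ) : ℂ)) = -1 := by
        rcases neg_one_pow_eq_or ℝ L with h | h <;> rw [h]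
        · push_cast
          rw [one_mul, mul_comm]
          exact Complex.exp_pi_mul_I
        · push_cast
          rw [show Complex.I * (-1 * ↑Real.pi) = -(↑Real.pi * Complex.I) by ring,
            Complex.exp_neg, Complex.exp_pi_mul_I]
          norm_num
      rw [hI, he]
      have : ((-1:ℝ) : ℂ) = -1 := by norm_num
      rw [this, sub_neg_eq_add, neg_add_cancel, norm_zero]
      have hD : (0:ℝ) ≤ Dfun ω := le_min (abs_nonneg _) (inv_nonneg.mpr (abs_nonneg _))
      positivity
    · rw [alphaL, if_neg hω]
      set t : ℝ := Real.tan (ω/4) with htdef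
      set u : ℝ := t ^ (2*L+1) with hudef
      have hsqrtpos : (0:ℝ) < Real.sqrt (1 + u^2) := by positivity
      have hsqrt1 : (1:ℝ) ≤ Real.sqrt (1 + u^2) := by
        rw [Real.one_le_sqrt]; nlinarith
      have habs_u : |u| = |t| ^ (2*L+1) := by rw [hudef, _root_.abs_pow]
      rcases key ω hω with ⟨hI, ht⟩ | ⟨hI, ht⟩
      · -- Ifun = 1, |t| ≤ 1
        have hD : Dfun ω = |t| := by
          rw [Dfun]
          apply min_eq_left
          rcases eq_or_ne t 0 with h0 | h0
          · simp [← htdef, h0]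
          · have hpos : 0 < |t| := abs_pos.mpr h0
            have hinv : |t| * |t|⁻¹ = 1 := mul_inv_cancel₀ (ne_of_gt hpos)
            nlinarith [inv_nonneg.mpr (abs_nonneg t)]
        rw [hI]
        have h1 : ((1:ℝ) : ℂ) = 1 := by norm_num
        rw [h1, abs_exp_I_sub_one]
        have hhalf : (2 * (-1:ℝ)^L * Real.arctan u) / 2 = (-1:ℝ)^L * Real.arctan u := by
          ring
        rw [hhalf]
        have hsin : |Real.sin ((-1:ℝ)^L * Real.arctan u)| = |Real.sin (Real.arctan u)| := by
          rcases neg_one_pow_eq_or ℝ L with h | h <;> rw [h]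
          · rw [one_mul]
          · rw [neg_one_mul, Real.sin_neg, abs_neg]
        rw [hsin, Real.sin_arctan, abs_div, _root_.abs_of_nonneg (le_of_lt hsqrtpos)]
        have hb : |u| / Real.sqrt (1 + u^2) ≤ |u| :=
          div_le_self (abs_nonneg u) hsqrt1
        have hDn : Dfun ω ^ (2*L+1) = |u| := by rw [hD, habs_u]
        rw [hDn]
        have h2s : (2:ℝ) ≤ 2 * Real.sqrt 2 := by linarith
        calc 2 * (|u| / Real.sqrt (1 + u^2)) ≤ 2 * |u| := by linarith
        _ ≤ 2 * Real.sqrt 2 * |u| := by nlinarith [abs_nonneg u]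
      · -- Ifun = -1, 1 ≤ |t|
        have hD : Dfun ω = |t|⁻¹ := by
          rw [Dfun]
          apply min_eq_right
          have hinv : |t| * |t|⁻¹ = 1 := mul_inv_cancel₀ (by positivity)
          nlinarith [inv_nonneg.mpr (abs_nonneg t)]
        rw [hI]
        have h1 : Complex.exp (Complex.I * ((2 * (-1:ℝ)^L * Real.arctan u : ℝ) : ℂ))
            - (((-1:ℝ)) : ℂ)
            = Complex.exp (Complex.I * ((2 * (-1:ℝ)^L * Real.arctan u : ℝ) : ℂ)) + 1 := by
          push_cast
          ring
        rw [h1, abs_exp_I_add_one]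
        have hhalf : (2 * (-1:ℝ)^L * Real.arctan u) / 2 = (-1:ℝ)^L * Real.arctan u := by
          ring
        rw [hhalf]
        have hcos : |Real.cos ((-1:ℝ)^L * Real.arctan u)| = |Real.cos (Real.arctan u)| := by
          rcases neg_one_pow_eq_or ℝ L with h | h <;> rw [h]
          · rw [one_mul]
          · rw [neg_one_mul, Real.cos_neg]
        rw [hcos, Real.cos_arctan, abs_div, _root_.abs_of_nonneg (le_of_lt hsqrtpos), abs_one]
        have hu1 : (1:ℝ) ≤ |u| := by
          rw [habs_u]
          exact one_le_pow₀ ht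
        have hupos : (0:ℝ) < |u| := by linarith
        have husqrt : |u| ≤ Real.sqrt (1 + u^2) := by
          rw [show |u| = Real.sqrt (u^2) by rw [Real.sqrt_sq_eq_abs]]
          exact Real.sqrt_le_sqrt (by nlinarith)
        have hb : (1:ℝ) / Real.sqrt (1 + u^2) ≤ 1 / |u| :=
          one_div_le_one_div_of_le hupos husqrt
        have hDn : Dfun ω ^ (2*L+1) = 1 / |u| := by
          rw [hD, inv_pow, habs_u, one_div]
        rw [hDn]
        have h1u : (0:ℝ) ≤ 1 / |u| := by positivity
        calc 2 * (1 / Real.sqrt (1 + u^2)) ≤ 2 * (1 / |u|) := by linarith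
        _ ≤ 2 * Real.sqrt 2 * (1 / |u|) := by nlinarith
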